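/- The belief operator Bel_E of the update answer set semantics satisfies strong noninterference: for every update sequence P and all extended logic programs P_1, P_2, and Q with Q ⊆ P_2 such that no pair of rules r ∈ Q and r' ∈ (P_2 \ Q) ∪ P_1 has complementary heads (head(r) = ¬head(r')), it holds that Bel_E(P + (P_1, P_2)) = Bel_E(P + (P_1 ∪ Q, P_2 \ Q)). -/

import Mathlib

/-- Classical literals over the alphabet `At`: atoms and strongly negated atoms. -/
inductive Lit (At : Type) : Type
  | pos : At → Lit At
  | neg : At → Lit At

/-- The complementary literal. -/
def Lit.compl {At : Type} : Lit At → Lit At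
  | .pos a => .neg a
  | .neg a => .pos a

/-- A rule of an extended logic program: an optional head literal (none for
    constraints), positive body literals, and weakly negated body literals. -/
structure Rule (At : Type) : Type where
  head : Option (Lit At)
  pbody : Set (Lit At)
  nbody : Set (Lit At)

/-- An extended logic program: a set of rules. -/
abbrev Program (At : Type) := Set (Rule At)

/-- An interpretation is consistent if it contains no pair of opposite literals. -/
def Consistent {At : Type} (S : Set (Lit At)) : Prop :=
  ∀ a : At, ¬ (Lit.pos a ∈ S ∧ Lit.neg a ∈ S)

/-- The body of `r` is satisfied by `S`. -/
def BodySat {At : Type} (S : Set (Lit At)) (r : Rule At) : Prop :=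
  r.pbody ⊆ S ∧ ∀ L ∈ r.nbody, L ∉ S

/-- The rule `r` is satisfied by `S`: the head is in `S`, or some positive body literal
    is absent from `S`, or some weakly negated body literal is in `S`. -/
def RuleSat {At : Type} (S : Set (Lit At)) (r : Rule At) : Prop :=
  (∃ L, r.head = some L ∧ L ∈ S) ∨ ¬ BodySat S r

/-- `T` is closed under the reduct of `P` with respect to `S`. -/
def ClosedUnder {At : Type} (P : Program At) (S T : Set (Lit At)) : Prop :=
  ∀ r ∈ P, (∀ L ∈ r.nbody, L ∉ S) → r.pbody ⊆ T → ∃ L, r.head = some L ∧ L ∈ T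

/-- `S` is a consistent answer set of the extended logic program `P`: it is consistent,
    closed under the reduct `P^S`, and minimal with this property. -/
def IsAnswerSet {At : Type} (P : Program At) (S : Set (Lit At)) : Prop :=
  Consistent S ∧ ClosedUnder P S S ∧ ∀ T, T ⊆ S → ClosedUnder P S T → T = S

/-- The set of consistent answer sets of `P`. -/
def AS {At : Type} (P : Program At) : Set (Set (Lit At)) := {S | IsAnswerSet P S}

/-- The rejection set `Rej_i(S, Ps)`: rules of `P_i` rejected by unrejected rules with
    complementary heads from later programs whose bodies are jointly satisfied by `S`. -/
def Rej {At : Type} (S : Set (Lit At)) (Ps : List (Program At)) : ℕ → Set (Rule At)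
  | i =>
    { r | r ∈ Ps.getD i ∅ ∧ ∃ j, ∃ _h1 : i < j, ∃ _h2 : j < Ps.length,
          ∃ r', r' ∈ Ps.getD j ∅ ∧ r' ∉ Rej S Ps j ∧
          (∃ L, r.head = some L ∧ r'.head = some (Lit.compl L)) ∧
          BodySat S r ∧ BodySat S r' }
  termination_by i => Ps.length - i
  decreasing_by omega

/-- The full rejection set `Rej(S, Ps)`. -/
def RejAll {At : Type} (S : Set (Lit At)) (Ps : List (Program At)) : Set (Rule At) :=
  {r | ∃ i, i < Ps.length ∧ r ∈ Rej S Ps i}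

/-- All rules occurring in the update sequence `Ps`. -/
def allRules {At : Type} (Ps : List (Program At)) : Program At :=
  {r | ∃ P ∈ Ps, r ∈ P}

/-- Update answer sets of the sequence `Ps`: consistent answer sets of the union of all
    programs minus the rejected rules. -/
def UpdAS {At : Type} (Ps : List (Program At)) : Set (Set (Lit At)) :=
  {S | IsAnswerSet (allRules Ps \ RejAll S Ps) S}

/-- The belief operator of the update answer set semantics. -/
def BelE {At : Type} (Ps : List (Program At)) : Set (Rule At) :=
  {r | ∀ S ∈ UpdAS Ps, RuleSat S r}



private lemma mem_Rej_iff {At : Type} (S : Set (Lit At)) (Ps : List (Program At)) (i : ℕ)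
    (r : Rule At) :
    r ∈ Rej S Ps i ↔ r ∈ Ps.getD i ∅ ∧ ∃ j, ∃ _h1 : i < j, ∃ _h2 : j < Ps.length,
      ∃ r', r' ∈ Ps.getD j ∅ ∧ r' ∉ Rej S Ps j ∧
      (∃ L, r.head = some L ∧ r'.head = some (Lit.compl L)) ∧ BodySat S r ∧ BodySat S r' := by
  conv_lhs => rw [Rej]
  exact Iff.rfl

private lemma Rej_last {At : Type} (S : Set (Lit At)) (Ps : List (Program At)) (i : ℕ)
    (h : Ps.length ≤ i + 1) : Rej S Ps i = ∅ := by
  ext r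
  rw [mem_Rej_iff]
  simp only [Set.mem_empty_iff_false, iff_false]
  rintro ⟨-, j, h1, h2, -⟩
  omega

private lemma getD_app2 {At : Type} (Ps : List (Program At)) (X Y : Program At) (i : ℕ) :
    (Ps ++ [X, Y]).getD i ∅ =
      if i < Ps.length then Ps.getD i ∅
      else if i = Ps.length then X
      else if i = Ps.length + 1 then Y else ∅ := by
  split_ifs with h1 h2 h3
  · exact List.getD_append _ _ _ _ h1
  · subst h2; rw [List.getD_append_right _ _ _ _ (le_refl _)]; simp
  · rw [List.getD_append_right _ _ _ _ (by omega)]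
    have : i - Ps.length = 1 := by omega
    rw [this]
    rfl
  · rw [List.getD_append_right _ _ _ _ (by omega)]
    apply List.getD_eq_default
    simp; omega

theorem belE_strong_noninterference {At : Type} (Ps : List (Program At))
    (P1 P2 Q : Program At) (hQ : Q ⊆ P2)
    (hheads : ¬ ∃ (r r' : Rule At) (L : Lit At),
        r ∈ Q ∧ r' ∈ (P2 \ Q) ∪ P1 ∧ r'.head = some L ∧ r.head = some (Lit.compl L)) :
    BelE (Ps ++ [P1, P2]) = BelE (Ps ++ [P1 ∪ Q, P2 \ Q]) := by
  classical
  have hcompl : ∀ L : Lit At, Lit.compl (Lit.compl L) = L := fun L => by cases L <;> rfl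
  set n := Ps.length with hn
  set A : List (Program At) := Ps ++ [P1, P2] with hA
  set B : List (Program At) := Ps ++ [P1 ∪ Q, P2 \ Q] with hB
  have hlenA : A.length = n + 2 := by simp [hA, hn]
  have hlenB : B.length = n + 2 := by simp [hB, hn]
  have hgA : ∀ i, A.getD i ∅ =
      if i < n then Ps.getD i ∅ else if i = n then P1 else if i = n + 1 then P2 else ∅ :=
    fun i => getD_app2 Ps P1 P2 i
  have hgB : ∀ i, B.getD i ∅ =
      if i < n then Ps.getD i ∅ else if i = n then P1 ∪ Q
      else if i = n + 1 then P2 \ Q else ∅ :=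
    fun i => getD_app2 Ps (P1 ∪ Q) (P2 \ Q) i
  -- no rule of Q is ever in Rej S B n
  have hQnotRej : ∀ (S : Set (Lit At)) (r : Rule At), r ∈ Q → r ∉ Rej S B n := by
    intro S r hrQ hmem
    rw [mem_Rej_iff] at hmem
    obtain ⟨-, j, hj1, hj2, r', hr'mem, -, ⟨L, hL1, hL2⟩, -, -⟩ := hmem
    rw [hlenB] at hj2
    rw [hgB, if_neg (by omega : ¬ j < n), if_neg (by omega : ¬ j = n),
      if_pos (by omega : j = n + 1)] at hr'mem
    exact hheads ⟨r, r', Lit.compl L, hrQ, Or.inl hr'mem, hL2, by rw [hL1, hcompl]⟩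
  -- Rej agrees at every level
  have key : ∀ (S : Set (Lit At)) (m i : ℕ), n + 2 - i ≤ m → Rej S A i = Rej S B i := by
    intro S m
    induction m with
    | zero =>
      intro i hi
      rw [Rej_last S A i (by omega), Rej_last S B i (by omega)]
    | succ m ih =>
      intro i hi
      rcases le_or_gt (n + 1) i with hbig | hsmall
      · rw [Rej_last S A i (by omega), Rej_last S B i (by omega)]
      rcases Nat.lt_or_ge i n with hlt | hge
      · -- i < n
        have hRn : Rej S A n = Rej S B n := ih n (by omega)
        ext r
        rw [mem_Rej_iff, mem_Rej_iff, hlenA, hlenB, hgA, hgB, if_pos hlt, if_pos hlt]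
        constructor
        · rintro ⟨hrmem, j, hj1, hj2, r', hr'mem, hr'nrej, hheadsr, hb1, hb2⟩
          refine ⟨hrmem, ?_⟩
          rcases Nat.lt_or_ge j n with hjn | hjn
          · refine ⟨j, hj1, by omega, r', ?_, ?_, hheadsr, hb1, hb2⟩
            · rw [hgB, if_pos hjn]; rw [hgA, if_pos hjn] at hr'mem; exact hr'mem
            · rw [← ih j (by omega)]; exact hr'nrej
          rcases Nat.eq_or_lt_of_le hjn with hjn' | hjn'
          · -- j = n : r' ∈ P1
            rw [hgA, if_neg (by omega), if_pos hjn'.symm] at hr'mem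
            refine ⟨j, hj1, by omega, r', ?_, ?_, hheadsr, hb1, hb2⟩
            · rw [hgB, if_neg (by omega), if_pos hjn'.symm]; exact Or.inl hr'mem
            · rw [← ih j (by omega)]; exact hr'nrej
          · -- j = n + 1 : r' ∈ P2
            rw [hgA, if_neg (by omega), if_neg (by omega),
              if_pos (by omega : j = n + 1)] at hr'mem
            by_cases hr'Q : r' ∈ Q
            · refine ⟨n, by omega, by omega, r', ?_, hQnotRej S r' hr'Q, hheadsr, hb1, hb2⟩
              rw [hgB, if_neg (by omega), if_pos rfl]
              exact Or.inr hr'Q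
            · refine ⟨n + 1, by omega, by omega, r', ?_, ?_, hheadsr, hb1, hb2⟩
              · rw [hgB, if_neg (by omega), if_neg (by omega), if_pos rfl]
                exact ⟨hr'mem, hr'Q⟩
              · rw [Rej_last S B (n + 1) (by omega)]
                exact Set.notMem_empty r'
        · rintro ⟨hrmem, j, hj1, hj2, r', hr'mem, hr'nrej, hheadsr, hb1, hb2⟩
          refine ⟨hrmem, ?_⟩
          rcases Nat.lt_or_ge j n with hjn | hjn
          · refine ⟨j, hj1, by omega, r', ?_, ?_, hheadsr, hb1, hb2⟩
            · rw [hgA, if_pos hjn]; rw [hgB, if_pos hjn] at hr'mem; exact hr'mem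
            · rw [ih j (by omega)]; exact hr'nrej
          rcases Nat.eq_or_lt_of_le hjn with hjn' | hjn'
          · -- j = n : r' ∈ P1 ∪ Q
            rw [hgB, if_neg (by omega), if_pos hjn'.symm] at hr'mem
            rcases hr'mem with hr'P1 | hr'Q
            · refine ⟨j, hj1, by omega, r', ?_, ?_, hheadsr, hb1, hb2⟩
              · rw [hgA, if_neg (by omega), if_pos hjn'.symm]; exact hr'P1
              · rw [ih j (by omega)]; exact hr'nrej
            · refine ⟨n + 1, by omega, by omega, r', ?_, ?_, hheadsr, hb1, hb2⟩
              · rw [hgA, if_neg (by omega), if_neg (by omega), if_pos rfl]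
                exact hQ hr'Q
              · rw [Rej_last S A (n + 1) (by omega)]
                exact Set.notMem_empty r'
          · -- j = n + 1 : r' ∈ P2 \ Q
            rw [hgB, if_neg (by omega), if_neg (by omega),
              if_pos (by omega : j = n + 1)] at hr'mem
            refine ⟨n + 1, by omega, by omega, r', ?_, ?_, hheadsr, hb1, hb2⟩
            · rw [hgA, if_neg (by omega), if_neg (by omega), if_pos rfl]
              exact hr'mem.1
            · rw [Rej_last S A (n + 1) (by omega)]
              exact Set.notMem_empty r'
      · -- i = n (since i < n + 1 and i ≥ n)
        have hieq : i = n := by omega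
        ext r
        rw [mem_Rej_iff, mem_Rej_iff, hlenA, hlenB, hgA, hgB,
          if_neg (by omega : ¬ i < n), if_neg (by omega : ¬ i < n),
          if_pos hieq, if_pos hieq]
        constructor
        · rintro ⟨hrmem, j, hj1, hj2, r', hr'mem, -, ⟨L, hL1, hL2⟩, hb1, hb2⟩
          rw [hgA, if_neg (by omega), if_neg (by omega),
            if_pos (by omega : j = n + 1)] at hr'mem
          have hr'notQ : r' ∉ Q := by
            intro hr'Q
            exact hheads ⟨r', r, L, hr'Q, Or.inr hrmem, hL1, hL2⟩
          refine ⟨Or.inl hrmem, n + 1, by omega, by omega, r', ?_, ?_,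
            ⟨L, hL1, hL2⟩, hb1, hb2⟩
          · rw [hgB, if_neg (by omega), if_neg (by omega), if_pos rfl]
            exact ⟨hr'mem, hr'notQ⟩
          · rw [Rej_last S B (n + 1) (by omega)]
            exact Set.notMem_empty r'
        · rintro ⟨hrmem, j, hj1, hj2, r', hr'mem, -, ⟨L, hL1, hL2⟩, hb1, hb2⟩
          rw [hgB, if_neg (by omega), if_neg (by omega),
            if_pos (by omega : j = n + 1)] at hr'mem
          have hrnotQ : r ∉ Q := by
            intro hrQ
            exact hheads ⟨r, r', Lit.compl L, hrQ, Or.inl hr'mem, hL2, by rw [hL1, hcompl]⟩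
          refine ⟨hrmem.resolve_right hrnotQ, n + 1, by omega, by omega, r', ?_, ?_,
            ⟨L, hL1, hL2⟩, hb1, hb2⟩
          · rw [hgA, if_neg (by omega), if_neg (by omega), if_pos rfl]
            exact hr'mem.1
          · rw [Rej_last S A (n + 1) (by omega)]
            exact Set.notMem_empty r'
  have hRejAll : ∀ S : Set (Lit At), RejAll S A = RejAll S B := by
    intro S
    unfold RejAll
    ext r
    simp only [Set.mem_setOf_eq, hlenA, hlenB]
    constructor <;> rintro ⟨i, hi, hmem⟩
    · exact ⟨i, hi, by rw [← key S (n + 2 - i) i (le_refl _)]; exact hmem⟩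
    · exact ⟨i, hi, by rw [key S (n + 2 - i) i (le_refl _)]; exact hmem⟩
  have hall : allRules A = allRules B := by
    unfold allRules
    ext r
    simp only [Set.mem_setOf_eq, hA, hB, List.mem_append, List.mem_cons,
      List.mem_singleton, List.not_mem_nil]
    constructor
    · rintro ⟨P, (hP | hP | hP | hP), hr⟩
      · exact ⟨P, Or.inl hP, hr⟩
      · rw [hP] at hr; exact ⟨P1 ∪ Q, Or.inr (Or.inl rfl), Or.inl hr⟩
      · rw [hP] at hr
        by_cases hrQ : r ∈ Q
        · exact ⟨P1 ∪ Q, Or.inr (Or.inl rfl), Or.inr hrQ⟩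
        · exact ⟨P2 \ Q, Or.inr (Or.inr (Or.inl rfl)), hr, hrQ⟩
      · exact absurd hP (by simp)
    · rintro ⟨P, (hP | hP | hP | hP), hr⟩
      · exact ⟨P, Or.inl hP, hr⟩
      · rw [hP] at hr
        rcases hr with hr | hr
        · exact ⟨P1, Or.inr (Or.inl rfl), hr⟩
        · exact ⟨P2, Or.inr (Or.inr (Or.inl rfl)), hQ hr⟩
      · rw [hP] at hr; exact ⟨P2, Or.inr (Or.inr (Or.inl rfl)), hr.1⟩
      · exact absurd hP (by simp)
  have hUpd : UpdAS A = UpdAS B := by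
    unfold UpdAS
    ext S
    rw [Set.mem_setOf_eq, Set.mem_setOf_eq, hall, hRejAll S]
  unfold BelE
  rw [hUpd]
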